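/- Suppose functions g_n : [0,∞) → ℝ (n ≥ 1) satisfy g_1' = -g_1 + αβ and, for n ≥ 2 with the convention g_0 ≡ α+β, the ODE g_n' = -n[g_n - ∑_{j=1}^{n-1}(g_j - g_{j-1})g_{n-j}], with all functions continuous on [0,∞) and differentiable on (0,∞). Then each g_n is a polynomial in t and e^{-t}; that is, there exists a polynomial P_n in two variables with real coefficients such that g_n(t) = P_n(t, e^{-t}) for all t ≥ 0. -/

import Mathlib

open MvPolynomial Set

noncomputable def DP (P : MvPolynomial (Fin 2) ℝ) : MvPolynomial (Fin 2) ℝ :=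
  pderiv 0 P - X 1 * pderiv 1 P

lemma DP_add (P Q : MvPolynomial (Fin 2) ℝ) : DP (P + Q) = DP P + DP Q := by
  simp only [DP, map_add]; ring

lemma DP_smul (r : ℝ) (P : MvPolynomial (Fin 2) ℝ) : DP (r • P) = r • DP P := by
  simp only [DP, (pderiv (0 : Fin 2)).map_smul, (pderiv (1 : Fin 2)).map_smul,
    smul_sub, mul_smul_comm]

lemma DP_mul (P Q : MvPolynomial (Fin 2) ℝ) : DP (P * Q) = DP P * Q + P * DP Q := by
  simp only [DP, pderiv_mul]; ring

lemma X_mul_pderiv_pow (i : Fin 2) (b : ℕ) :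
    X i * pderiv i (X i ^ b) = (b : ℝ) • (X (R := ℝ) i ^ b) := by
  cases b with
  | zero => simp
  | succ m =>
    rw [pderiv_pow, pderiv_X_self, smul_eq_C_mul, ← C_eq_coe_nat]
    push_cast
    ring

lemma DP_X0_pow (a : ℕ) : DP (X 0 ^ a) = (a : ℝ) • (X (R := ℝ) 0 ^ (a - 1)) := by
  have h01 : (0 : Fin 2) ≠ 1 := by decide
  cases a with
  | zero => simp [DP]
  | succ m =>
    simp only [DP, pderiv_pow, pderiv_X_self, pderiv_X_of_ne h01, mul_zero, mul_one,
      Nat.succ_sub_one, sub_zero]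
    rw [smul_eq_C_mul, C_eq_coe_nat]

lemma DP_X1_pow (b : ℕ) : DP (X 1 ^ b) = -((b : ℝ) • (X (R := ℝ) 1 ^ b)) := by
  have h10 : (1 : Fin 2) ≠ 0 := by decide
  simp only [DP]
  rw [X_mul_pderiv_pow]
  rw [pderiv_pow, pderiv_X_of_ne h10, mul_zero, zero_sub]

lemma DP_pow (a b : ℕ) :
    DP (X 0 ^ a * X 1 ^ b) =
      (a : ℝ) • (X (R := ℝ) 0 ^ (a - 1) * X 1 ^ b) - (b : ℝ) • (X (R := ℝ) 0 ^ a * X 1 ^ b) := by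
  rw [DP_mul, DP_X0_pow, DP_X1_pow]
  rw [smul_mul_assoc, mul_neg, mul_smul_comm]
  abel

lemma mono_surj (n : ℕ) (hn : 1 ≤ n) (b : ℕ) :
    ∀ a : ℕ, ∀ c : ℝ, ∃ P : MvPolynomial (Fin 2) ℝ,
      DP P + (n : ℝ) • P = c • (X 0 ^ a * X 1 ^ b) := by
  by_cases hb : b = n
  · subst hb
    intro a c
    refine ⟨(c / (a + 1)) • (X 0 ^ (a + 1) * X 1 ^ b), ?_⟩
    rw [DP_smul, DP_pow, smul_smul, Nat.succ_sub_one]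
    rw [smul_sub, smul_smul, smul_smul]
    have ha : ((a : ℝ) + 1) ≠ 0 := by positivity
    match_scalars
    · push_cast; field_simp
    · push_cast; field_simp; ring
  · have hbn : ((b : ℝ)) ≠ (n : ℝ) := by exact_mod_cast hb
    have h : (n : ℝ) - b ≠ 0 := sub_ne_zero.mpr (Ne.symm hbn)
    intro a
    induction a with
    | zero =>
      intro c
      refine ⟨(c / ((n : ℝ) - b)) • (X 0 ^ 0 * X 1 ^ b), ?_⟩
      rw [DP_smul, DP_pow]
      rw [smul_sub, smul_smul, smul_smul, smul_smul]
      match_scalars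
      push_cast
      field_simp
      ring
    | succ m ih =>
      intro c
      obtain ⟨P₁, hP₁⟩ := ih (-((m + 1) * c / ((n : ℝ) - b)))
      have h2 : DP P₁ = (-((m + 1) * c / ((n : ℝ) - b))) • (X 0 ^ m * X 1 ^ b) - (n : ℝ) • P₁ :=
        eq_sub_of_add_eq hP₁
      refine ⟨(c / ((n : ℝ) - b)) • (X 0 ^ (m + 1) * X 1 ^ b) + P₁, ?_⟩
      rw [DP_add, smul_add, DP_smul, DP_pow, Nat.succ_sub_one, h2]
      match_scalars
      · push_cast; field_simp; ring
      · push_cast; field_simp; ring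
      · push_cast; ring

lemma surj (n : ℕ) (hn : 1 ≤ n) (Q : MvPolynomial (Fin 2) ℝ) :
    ∃ P : MvPolynomial (Fin 2) ℝ, DP P + (n : ℝ) • P = Q := by
  induction Q using MvPolynomial.induction_on' with
  | monomial u c =>
    obtain ⟨P, hP⟩ := mono_surj n hn (u 1) (u 0) c
    refine ⟨P, ?_⟩
    rw [hP, smul_eq_C_mul, monomial_eq]
    rw [Finsupp.prod_fintype _ _ (fun i => pow_zero _), Fin.prod_univ_two]
  | add p q hp hq =>
    obtain ⟨P₁, h₁⟩ := hp
    obtain ⟨P₂, h₂⟩ := hq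
    exact ⟨P₁ + P₂, by rw [DP_add, smul_add, ← h₁, ← h₂]; ring⟩

lemma hasDerivAt_EV (P : MvPolynomial (Fin 2) ℝ) (t : ℝ) :
    HasDerivAt (fun s => MvPolynomial.eval ![s, Real.exp (-s)] P)
      (MvPolynomial.eval ![t, Real.exp (-t)] (DP P)) t := by
  induction P using MvPolynomial.induction_on with
  | C a => simpa [DP] using hasDerivAt_const t a
  | add p q hp hq =>
    have := hp.add hq
    simpa [DP_add, map_add, Pi.add_def] using this
  | mul_X p i hp =>
    have h01 : (0 : Fin 2) ≠ 1 := by decide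
    have h10 : (1 : Fin 2) ≠ 0 := by decide
    fin_cases i
    · have h := hp.mul (hasDerivAt_id t)
      show HasDerivAt (fun s => MvPolynomial.eval ![s, Real.exp (-s)] (p * X 0))
        (MvPolynomial.eval ![t, Real.exp (-t)] (DP (p * X 0))) t
      have hf : (fun s => MvPolynomial.eval ![s, Real.exp (-s)] (p * X 0))
          = fun s => MvPolynomial.eval ![s, Real.exp (-s)] p * s := by
        funext s; simp
      rw [hf]
      refine h.congr_deriv ?_
      rw [DP_mul]
      simp only [DP, pderiv_X_self, pderiv_X_of_ne h01, mul_zero, sub_zero, map_add, map_mul,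
        map_sub, map_one, eval_X, Matrix.cons_val_zero, Matrix.cons_val_one, Matrix.head_cons, id]
      try ring
    · have hexp : HasDerivAt (fun s => Real.exp (-s)) (-Real.exp (-t)) t := by
        simpa [Function.comp_def] using (Real.hasDerivAt_exp (-t)).comp t ((hasDerivAt_id t).neg)
      have h := hp.mul hexp
      show HasDerivAt (fun s => MvPolynomial.eval ![s, Real.exp (-s)] (p * X 1))
        (MvPolynomial.eval ![t, Real.exp (-t)] (DP (p * X 1))) t
      have hf : (fun s => MvPolynomial.eval ![s, Real.exp (-s)] (p * X 1))
          = fun s => MvPolynomial.eval ![s, Real.exp (-s)] p * Real.exp (-s) := by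
        funext s; simp
      rw [hf]
      refine h.congr_deriv ?_
      rw [DP_mul]
      simp only [DP, pderiv_X_self, pderiv_X_of_ne h10, mul_one, zero_sub, map_add, map_mul,
        map_sub, map_neg, eval_X, Matrix.cons_val_zero, Matrix.cons_val_one, Matrix.head_cons]
      try ring

lemma decay (n : ℕ) (f : ℝ → ℝ) (hf : ContinuousOn f (Ici 0))
    (hder : ∀ t : ℝ, 0 < t → HasDerivAt f (-(n : ℝ) * f t) t) :
    ∀ t : ℝ, 0 ≤ t → f t = f 0 * Real.exp (-((n : ℝ) * t)) := by
  set u : ℝ → ℝ := fun t => f t * Real.exp ((n : ℝ) * t) with hu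
  have hucont : ContinuousOn u (Ici 0) :=
    hf.mul ((Real.continuous_exp.comp (continuous_const.mul continuous_id)).continuousOn)
  have huder : ∀ x : ℝ, 0 < x → HasDerivAt u 0 x := by
    intro x hx
    have h1 : HasDerivAt (fun t : ℝ => Real.exp ((n : ℝ) * t))
        ((n : ℝ) * Real.exp ((n : ℝ) * x)) x := by
      have := (Real.hasDerivAt_exp ((n : ℝ) * x)).comp x ((hasDerivAt_id x).const_mul (n : ℝ))
      refine this.congr_deriv ?_
      ring
    have := (hder x hx).mul h1
    refine this.congr_deriv ?_
    ring
  have key : ∀ t : ℝ, 0 < t → u t = u 0 := by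
    intro t ht
    have step1 : ∀ a : ℝ, 0 < a → a ≤ t → u t = u a := by
      intro a ha hat
      have hconst := constant_of_has_deriv_right_zero
        (f := u) (a := a) (b := t)
        (hucont.mono (fun x hx => le_trans ha.le hx.1))
        (fun x hx => (huder x (lt_of_lt_of_le ha hx.1)).hasDerivWithinAt)
      exact hconst t ⟨hat, le_refl t⟩
    have h1 : Filter.Tendsto u (nhdsWithin 0 (Ioi 0)) (nhds (u 0)) :=
      ((hucont 0 Set.self_mem_Ici).mono Ioi_subset_Ici_self).tendsto
    have h2 : Filter.Tendsto u (nhdsWithin 0 (Ioi 0)) (nhds (u t)) := by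
      have hev : ∀ᶠ x in nhdsWithin 0 (Ioi 0), u t = u x := by
        filter_upwards [Ioo_mem_nhdsGT_of_mem (Set.left_mem_Ico.mpr ht)] with x hx
        exact step1 x hx.1 hx.2.le
      exact Filter.Tendsto.congr' (by filter_upwards [hev] with x hx; exact hx)
        tendsto_const_nhds
    exact tendsto_nhds_unique h2 h1
  intro t ht
  rcases eq_or_lt_of_le ht with rfl | ht'
  · simp
  · have hu0 : u 0 = f 0 := by simp [hu]
    have h3 : f t = u t * Real.exp (-((n : ℝ) * t)) := by
      rw [hu]
      rw [mul_assoc, ← Real.exp_add]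
      simp
    rw [h3, key t ht', hu0]

lemma solve (n : ℕ) (hn : 1 ≤ n) (Q : MvPolynomial (Fin 2) ℝ) (f : ℝ → ℝ)
    (hf : ContinuousOn f (Ici 0))
    (hder : ∀ t : ℝ, 0 < t →
      HasDerivAt f (-(n : ℝ) * f t + MvPolynomial.eval ![t, Real.exp (-t)] Q) t) :
    ∃ P : MvPolynomial (Fin 2) ℝ, ∀ t : ℝ, 0 ≤ t →
      f t = MvPolynomial.eval ![t, Real.exp (-t)] P := by
  obtain ⟨P₀, hP₀⟩ := surj n hn Q
  set p : ℝ → ℝ := fun s => MvPolynomial.eval ![s, Real.exp (-s)] P₀ with hp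
  have hpder : ∀ t : ℝ,
      HasDerivAt p (-(n : ℝ) * p t + MvPolynomial.eval ![t, Real.exp (-t)] Q) t := by
    intro t
    have h := hasDerivAt_EV P₀ t
    convert h using 1
    have heq : MvPolynomial.eval ![t, Real.exp (-t)] (DP P₀ + (n : ℝ) • P₀)
        = MvPolynomial.eval ![t, Real.exp (-t)] Q := by rw [hP₀]
    simp only [map_add, smul_eq_C_mul, map_mul, eval_C] at heq
    simp only [hp]
    linarith [heq]
  have hpcont : Continuous p := continuous_iff_continuousAt.mpr fun x => (hpder x).continuousAt
  set d : ℝ → ℝ := fun s => f s - p s with hd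
  have hdcont : ContinuousOn d (Ici 0) := hf.sub hpcont.continuousOn
  have hdder : ∀ t : ℝ, 0 < t → HasDerivAt d (-(n : ℝ) * d t) t := by
    intro t ht
    have := (hder t ht).sub (hpder t)
    refine this.congr_deriv ?_
    simp only [hd]
    ring
  have hdec := decay n d hdcont hdder
  refine ⟨P₀ + C (d 0) * X 1 ^ n, ?_⟩
  intro t ht
  have hft : f t = p t + d t := by simp [hd]
  rw [hft, hdec t ht]
  simp only [map_add, map_mul, map_pow, eval_C, eval_X, Matrix.cons_val_one, Matrix.head_cons, Matrix.cons_val_fin_one, hp]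
  rw [show (n : ℝ) * t = (n : ℝ) * t from rfl, show -((n:ℝ) * t) = (n : ℝ) * (-t) by ring,
    Real.exp_nat_mul]

theorem stmt5 (α β : ℝ) (hα : α ∈ Set.Icc (0:ℝ) 1) (hβ : β ∈ Set.Icc (0:ℝ) 1)
    (g : ℕ → ℝ → ℝ)
    (hg0 : ∀ t : ℝ, g 0 t = α + β)
    (hcont : ∀ n : ℕ, ContinuousOn (g n) (Set.Ici 0))
    (hode1 : ∀ t : ℝ, 0 < t → HasDerivAt (g 1) (-(g 1 t) + α * β) t)
    (hoden : ∀ n : ℕ, 2 ≤ n → ∀ t : ℝ, 0 < t → HasDerivAt (g n)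
      (-(n : ℝ) * (g n t - ∑ j ∈ Finset.Ico 1 n, (g j t - g (j - 1) t) * g (n - j) t)) t)
    (n : ℕ) (hn : 1 ≤ n) :
    ∃ P : MvPolynomial (Fin 2) ℝ, ∀ t : ℝ, 0 ≤ t →
      g n t = MvPolynomial.eval ![t, Real.exp (-t)] P := by
  clear hn
  induction n using Nat.strong_induction_on with
  | _ n ih =>
    match n, ih with
    | 0, _ =>
      exact ⟨C (α + β), fun t _ => by simp [hg0 t]⟩
    | 1, _ =>
      apply solve 1 le_rfl (C (α * β)) (g 1) (hcont 1)
      intro t ht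
      have := hode1 t ht
      convert this using 1
      simp
    | (m + 2), ih =>
      set n := m + 2 with hnn
      have hQ : ∃ Q : MvPolynomial (Fin 2) ℝ, ∀ t : ℝ, 0 ≤ t →
          (n : ℝ) * ∑ j ∈ Finset.Ico 1 n, (g j t - g (j - 1) t) * g (n - j) t
            = MvPolynomial.eval ![t, Real.exp (-t)] Q := by
        have hterm : ∀ j ∈ Finset.Ico 1 n, ∃ Qj : MvPolynomial (Fin 2) ℝ, ∀ t : ℝ, 0 ≤ t →
            (g j t - g (j - 1) t) * g (n - j) t = MvPolynomial.eval ![t, Real.exp (-t)] Qj := by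
          intro j hj
          rw [Finset.mem_Ico] at hj
          obtain ⟨P₁, h₁⟩ := ih j (by omega)
          obtain ⟨P₂, h₂⟩ := ih (j - 1) (by omega)
          obtain ⟨P₃, h₃⟩ := ih (n - j) (by omega)
          exact ⟨(P₁ - P₂) * P₃, fun t ht => by
            simp [h₁ t ht, h₂ t ht, h₃ t ht]⟩
        choose Qf hQf using hterm
        refine ⟨C (n : ℝ) * ∑ j ∈ (Finset.Ico 1 n).attach, Qf j.1 j.2, fun t ht => ?_⟩
        rw [map_mul, eval_C, map_sum]
        congr 1
        rw [← Finset.sum_attach (Finset.Ico 1 n) (fun j => (g j t - g (j - 1) t) * g (n - j) t)]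
        exact Finset.sum_congr rfl fun j _ => hQf j.1 j.2 t ht
      obtain ⟨Q, hQ⟩ := hQ
      apply solve n (by omega) Q (g n) (hcont n)
      intro t ht
      have := hoden n (by omega) t ht
      convert this using 1
      rw [← hQ t ht.le]
      ring
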